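/- Let A be a Banach algebra and B a Banach A-bimodule. Suppose there exists a₀ ∈ A such that B** = π_ℓ***(â₀, B**) (every b″ ∈ B** can be written as π_ℓ***(â₀, y″) for some y″ ∈ B**, with â₀ the canonical image of a₀ in A**) and a₀ has the Rw*w-property with respect to B: for every net (ν_α) in B*, if the net (ν_α a₀) converges to 0 in the weak* topology of B* (where (ν a₀)(b) := ν(π_ℓ(a₀, b))), then (ν_α a₀) converges to 0 in the weak topology of B*. Then Z^ℓ_{A**}(B**) = B**, i.e., for every b″ ∈ B** the map a″ ↦ π_r***(b″, a″) is weak*–weak* continuous from A** to B**. -/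

import Mathlib

/- Common setup: Arens extensions of bounded bilinear maps between Banach spaces,
weak*–weak* continuity, and related notions. -/

open NormedSpace ContinuousLinearMap Filter Topology

section ArensDefs

variable (𝕜 : Type*) [RCLike 𝕜]
variable {X Y Z : Type*}
  [NormedAddCommGroup X] [NormedSpace 𝕜 X]
  [NormedAddCommGroup Y] [NormedSpace 𝕜 Y]
  [NormedAddCommGroup Z] [NormedSpace 𝕜 Z]

/- Helper instances: the operator-norm structures on the nested spaces of continuous linear maps
used below (Lean no longer finds them by itself: the instance search nests too deeply). -/
noncomputable instance instSeminormedAddCommGroupArensS :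
    SeminormedAddCommGroup (StrongDual 𝕜 Z →L[𝕜] X →L[𝕜] StrongDual 𝕜 Y) :=
  ContinuousLinearMap.toSeminormedAddCommGroup (E := StrongDual 𝕜 Z)
    (F := X →L[𝕜] StrongDual 𝕜 Y) (σ₁₂ := RingHom.id 𝕜)

noncomputable instance instNormedSpaceArensS :
    NormedSpace 𝕜 (StrongDual 𝕜 Z →L[𝕜] X →L[𝕜] StrongDual 𝕜 Y) :=
  ContinuousLinearMap.toNormedSpace (E := StrongDual 𝕜 Z)
    (F := X →L[𝕜] StrongDual 𝕜 Y) (σ₁₂ := RingHom.id 𝕜) (𝕜' := 𝕜)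

noncomputable instance instSeminormedAddCommGroupArensSS :
    SeminormedAddCommGroup (StrongDual 𝕜 (StrongDual 𝕜 Y) →L[𝕜] StrongDual 𝕜 Z →L[𝕜] StrongDual 𝕜 X) :=
  ContinuousLinearMap.toSeminormedAddCommGroup (E := StrongDual 𝕜 (StrongDual 𝕜 Y))
    (F := StrongDual 𝕜 Z →L[𝕜] StrongDual 𝕜 X) (σ₁₂ := RingHom.id 𝕜)

noncomputable instance instNormedSpaceArensSS :
    NormedSpace 𝕜 (StrongDual 𝕜 (StrongDual 𝕜 Y) →L[𝕜] StrongDual 𝕜 Z →L[𝕜] StrongDual 𝕜 X) :=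
  ContinuousLinearMap.toNormedSpace (E := StrongDual 𝕜 (StrongDual 𝕜 Y))
    (F := StrongDual 𝕜 Z →L[𝕜] StrongDual 𝕜 X) (σ₁₂ := RingHom.id 𝕜) (𝕜' := 𝕜)

noncomputable instance instSeminormedAddCommGroupArensExt :
    SeminormedAddCommGroup (StrongDual 𝕜 (StrongDual 𝕜 Y) →L[𝕜] StrongDual 𝕜 (StrongDual 𝕜 Z)) :=
  ContinuousLinearMap.toSeminormedAddCommGroup (E := StrongDual 𝕜 (StrongDual 𝕜 Y))
    (F := StrongDual 𝕜 (StrongDual 𝕜 Z)) (σ₁₂ := RingHom.id 𝕜)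

noncomputable instance instNormedSpaceArensExt :
    NormedSpace 𝕜 (StrongDual 𝕜 (StrongDual 𝕜 Y) →L[𝕜] StrongDual 𝕜 (StrongDual 𝕜 Z)) :=
  ContinuousLinearMap.toNormedSpace (E := StrongDual 𝕜 (StrongDual 𝕜 Y))
    (F := StrongDual 𝕜 (StrongDual 𝕜 Z)) (σ₁₂ := RingHom.id 𝕜) (𝕜' := 𝕜)

noncomputable instance instSeminormedAddCommGroupArensExt' :
    SeminormedAddCommGroup ((StrongDual 𝕜 Z →L[𝕜] StrongDual 𝕜 X) →L[𝕜] StrongDual 𝕜 Z →L[𝕜] 𝕜) :=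
  ContinuousLinearMap.toSeminormedAddCommGroup (E := StrongDual 𝕜 Z →L[𝕜] StrongDual 𝕜 X)
    (F := StrongDual 𝕜 Z →L[𝕜] 𝕜) (σ₁₂ := RingHom.id 𝕜)

noncomputable instance instNormedSpaceArensExt' :
    NormedSpace 𝕜 ((StrongDual 𝕜 Z →L[𝕜] StrongDual 𝕜 X) →L[𝕜] StrongDual 𝕜 Z →L[𝕜] 𝕜) :=
  ContinuousLinearMap.toNormedSpace (E := StrongDual 𝕜 Z →L[𝕜] StrongDual 𝕜 X)
    (F := StrongDual 𝕜 Z →L[𝕜] 𝕜) (σ₁₂ := RingHom.id 𝕜) (𝕜' := 𝕜)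

/-- The first adjoint `m*` of a bounded bilinear map `m : X × Y → Z`, characterized by
`⟨m*(z′,x), y⟩ = ⟨z′, m(x,y)⟩`. -/
noncomputable def arensS (m : X →L[𝕜] Y →L[𝕜] Z) :
    StrongDual 𝕜 Z →L[𝕜] X →L[𝕜] StrongDual 𝕜 Y :=
  ((compL 𝕜 X (Y →L[𝕜] Z) (StrongDual 𝕜 Y)).flip m).comp (compL 𝕜 Y Z 𝕜)

/-- The second adjoint `m**`, characterized by `⟨m**(y″,z′), x⟩ = ⟨y″, m*(z′,x)⟩`. -/
noncomputable def arensSS (m : X →L[𝕜] Y →L[𝕜] Z) :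
    StrongDual 𝕜 (StrongDual 𝕜 Y) →L[𝕜] StrongDual 𝕜 Z →L[𝕜] StrongDual 𝕜 X :=
  ((compL 𝕜 (StrongDual 𝕜 Z) (X →L[𝕜] StrongDual 𝕜 Y) (StrongDual 𝕜 X)).flip (arensS 𝕜 m)).comp
    (compL 𝕜 X (StrongDual 𝕜 Y) 𝕜)

/-- The Arens (triple adjoint) extension `m***` of a bounded bilinear map, characterized by
`⟨m***(x″,y″), z′⟩ = ⟨x″, m**(y″,z′)⟩`. -/
noncomputable def arensExt (m : X →L[𝕜] Y →L[𝕜] Z) :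
    StrongDual 𝕜 (StrongDual 𝕜 X) →L[𝕜] StrongDual 𝕜 (StrongDual 𝕜 Y) →L[𝕜] StrongDual 𝕜 (StrongDual 𝕜 Z) :=
  ((compL 𝕜 (StrongDual 𝕜 (StrongDual 𝕜 Y)) (StrongDual 𝕜 Z →L[𝕜] StrongDual 𝕜 X) (StrongDual 𝕜 (StrongDual 𝕜 Z))).flip
      (arensSS 𝕜 m)).comp
    (compL 𝕜 (StrongDual 𝕜 Z) (StrongDual 𝕜 X) 𝕜)

end ArensDefs

/-- A map between dual spaces is weak*–weak* continuous if it is continuous with respect to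
the weak* topologies on both sides. -/
def IsWeakStarWeakStarContinuous (𝕜 : Type*) [RCLike 𝕜] {E F : Type*}
    [NormedAddCommGroup E] [NormedSpace 𝕜 E]
    [NormedAddCommGroup F] [NormedSpace 𝕜 F]
    (T : StrongDual 𝕜 E → StrongDual 𝕜 F) : Prop :=
  Continuous fun x : WeakDual 𝕜 E =>
    (StrongDual.toWeakDual (T (WeakDual.toStrongDual x)) : WeakDual 𝕜 F)


section AuxLemmas
variable {𝕜 : Type*} [RCLike 𝕜] {E : Type*} [NormedAddCommGroup E] [NormedSpace 𝕜 E]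

/-- L1: approximate the sup of `re ∘ μ` on a ball. -/
lemma aux_exists_re_lt (μ : StrongDual 𝕜 E) {r c : ℝ} (hr : 0 ≤ r) (hc : c < r * ‖μ‖) :
    ∃ b : E, ‖b‖ ≤ r ∧ c < RCLike.re (μ b) := by
  rcases lt_or_ge c 0 with h0 | h0
  · exact ⟨0, by simpa using hr, by simpa using h0⟩
  -- c ≥ 0 hence r > 0 and ‖μ‖ > 0
  have hpos := lt_of_le_of_lt h0 hc
  have hμ : 0 < ‖μ‖ := by
    rcases mul_pos_iff.mp hpos with ⟨_, h⟩ | ⟨h, _⟩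
    · exact h
    · exact absurd hr (not_le.mpr h)
  have hrpos : 0 < r := by
    rcases mul_pos_iff.mp hpos with ⟨h, _⟩ | ⟨_, h⟩
    · exact h
    · exact absurd (norm_nonneg μ) (not_le.mpr h)
  have hcr : c / r < ‖μ‖ := (div_lt_iff₀' hrpos).mpr hc
  -- find b₁ with ‖b₁‖ ≤ 1, c/r < ‖μ b₁‖
  obtain ⟨b₁, hb₁, hvb₁⟩ : ∃ b₁ : E, ‖b₁‖ ≤ 1 ∧ c / r < ‖μ b₁‖ := by
    by_contra hcon
    push_neg at hcon
    have : ‖μ‖ ≤ c / r := by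
      refine μ.opNorm_le_bound (by positivity) fun x => ?_
      rcases eq_or_ne x 0 with rfl | hx
      · simp [div_nonneg h0 hr]
      · have hxn : (0:ℝ) < ‖x‖ := norm_pos_iff.mpr hx
        have := hcon ((((‖x‖)⁻¹ : ℝ) : 𝕜) • x) (by
          rw [norm_smul, RCLike.norm_ofReal, abs_inv, abs_of_pos hxn, inv_mul_cancel₀ hxn.ne']
          )
        rw [map_smul, norm_smul, RCLike.norm_ofReal, abs_inv, abs_of_pos hxn] at this
        calc ‖μ x‖ = ‖x‖ * (‖x‖⁻¹ * ‖μ x‖) := by field_simp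
        _ ≤ ‖x‖ * (c / r) := by nlinarith [norm_nonneg (μ x)]
        _ = c / r * ‖x‖ := mul_comm _ _
    linarith
  have hρ : μ b₁ ≠ 0 := by
    intro h; rw [h, norm_zero] at hvb₁
    exact absurd hvb₁ (not_lt.mpr (by positivity))
  -- rotate and scale
  set s : 𝕜 := (starRingEnd 𝕜) (μ b₁) / (‖μ b₁‖ : 𝕜) with hs
  have hsnorm : ‖s‖ = 1 := by
    rw [hs, norm_div, RCLike.norm_conj, RCLike.norm_ofReal, abs_of_pos (norm_pos_iff.mpr hρ),
      div_self (norm_pos_iff.mpr hρ).ne']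
  refine ⟨((r:ℝ):𝕜) • (s • b₁), ?_, ?_⟩
  · rw [norm_smul, norm_smul, RCLike.norm_ofReal, abs_of_pos hrpos, hsnorm, one_mul]
    calc r * ‖b₁‖ ≤ r * 1 := by nlinarith
    _ = r := mul_one r
  · have : μ (((r:ℝ):𝕜) • (s • b₁)) = ((r * ‖μ b₁‖ : ℝ) : 𝕜) := by
      rw [map_smul, map_smul, hs, smul_eq_mul, smul_eq_mul]
      rw [div_mul_eq_mul_div, RCLike.conj_mul]
      push_cast
      rw [sq]
      field_simp
    rw [this, RCLike.ofReal_re]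
    calc c = r * (c / r) := by field_simp
    _ < r * ‖μ b₁‖ := by apply mul_lt_mul_of_pos_left hvb₁ hrpos

/-- L5: ultrafilter limit of a bounded sequence of functionals. -/
lemma aux_exists_ulim (U : Ultrafilter ℕ) (g : ℕ → StrongDual 𝕜 E) {M : ℝ}
    (hM : ∀ n, ‖g n‖ ≤ M) :
    ∃ G : StrongDual 𝕜 E, ∀ x, Tendsto (fun n => g n x) ↑U (𝓝 (G x)) := by
  have key : ∀ x : E, ∃ a : 𝕜, Tendsto (fun n => g n x) ↑U (𝓝 a) := by
    intro x
    have hcpt : IsCompact (Metric.closedBall (0:𝕜) (M * ‖x‖)) := isCompact_closedBall _ _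
    have hmem : ∀ n, g n x ∈ Metric.closedBall (0:𝕜) (M * ‖x‖) := fun n => by
      rw [Metric.mem_closedBall, dist_zero_right]
      calc ‖g n x‖ ≤ ‖g n‖ * ‖x‖ := (g n).le_opNorm x
      _ ≤ M * ‖x‖ := by have := hM n; have := norm_nonneg x; nlinarith
    obtain ⟨a, _, hle⟩ := hcpt.ultrafilter_le_nhds (U.map fun n => g n x) (by
      rw [Ultrafilter.coe_map]
      exact Filter.le_principal_iff.mpr (Filter.mem_map.mpr
        (Ultrafilter.mem_coe.mp (Filter.univ_mem' hmem))))
    rw [Ultrafilter.coe_map] at hle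
    exact ⟨a, hle⟩
  choose G0 hG0 using key
  have hadd : ∀ x y, G0 (x + y) = G0 x + G0 y := fun x y =>
    tendsto_nhds_unique (by simpa [map_add] using hG0 (x + y)) ((hG0 x).add (hG0 y))
  have hsmul : ∀ (c : 𝕜) x, G0 (c • x) = c • G0 x := fun c x =>
    tendsto_nhds_unique (by simpa [map_smul] using hG0 (c • x))
      (by simpa [smul_eq_mul] using (hG0 x).const_mul c)
  have hbound : ∀ x, ‖G0 x‖ ≤ M * ‖x‖ := fun x => by
    have h1 : Tendsto (fun n => ‖g n x‖) ↑U (𝓝 ‖G0 x‖) := (hG0 x).norm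
    refine le_of_tendsto h1 (Eventually.of_forall fun n => ?_)
    calc ‖g n x‖ ≤ ‖g n‖ * ‖x‖ := (g n).le_opNorm x
    _ ≤ M * ‖x‖ := by have := hM n; have := norm_nonneg x; nlinarith
  exact ⟨LinearMap.mkContinuous ⟨⟨G0, hadd⟩, hsmul⟩ M hbound, hG0⟩


/-- L6: dependent recursion with choice. -/
lemma aux_exists_seq_rec {α : Type*} (a₀ : α) (P : ℕ → (ℕ → α) → α → Prop)
    (hmono : ∀ n (f g : ℕ → α), (∀ m, m < n → f m = g m) → ∀ a, P n f a → P n g a)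
    (hex : ∀ (f : ℕ → α) (n : ℕ), ∃ a, P n f a) :
    ∃ F : ℕ → α, ∀ n, P n F (F n) := by
  classical
  let step : (ℕ → α) → ℕ → α := fun f n => Classical.choose (hex f n)
  have hstep : ∀ f n, P n f (step f n) := fun f n => Classical.choose_spec (hex f n)
  let H : ℕ → ℕ → α := fun n => Nat.rec (fun _ => a₀)
    (fun n Hn => Function.update Hn n (step Hn n)) n
  have hH0 : H 0 = fun _ => a₀ := rfl
  have hHsucc : ∀ n, H (n + 1) = Function.update (H n) n (step (H n) n) := fun n => rfl
  have hstab : ∀ n m, m < n → H n m = H (m + 1) m := by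
    intro n
    induction n with
    | zero => intro m hm; omega
    | succ n ih =>
      intro m hm
      rcases Nat.lt_succ_iff_lt_or_eq.mp hm with h | rfl
      · rw [hHsucc, Function.update_of_ne (by omega)]
        exact ih m h
      · rfl
  refine ⟨fun n => H (n + 1) n, fun n => ?_⟩
  have hFn : H (n + 1) n = step (H n) n := by
    rw [hHsucc, Function.update_self]
  show P n (fun k => H (k + 1) k) (H (n + 1) n)
  rw [hFn]
  exact hmono n (H n) _ (fun m hm => hstab n m hm) _ (hstep (H n) n)


/-- L3: a functional on the dual vanishing on the joint kernel of finitely many evaluations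
is itself an evaluation. -/
lemma aux_exists_of_vanish (m : ℕ) (c : Fin m → E) (ξ : StrongDual 𝕜 (StrongDual 𝕜 E))
    (h : ∀ ν : StrongDual 𝕜 E, (∀ j, ν (c j) = 0) → ξ ν = 0) :
    ∃ f : E, ∀ ν : StrongDual 𝕜 E, ξ ν = ν f := by
  classical
  -- the evaluation map Φ
  let Φ : StrongDual 𝕜 E →ₗ[𝕜] (Fin m → 𝕜) :=
    { toFun := fun ν => fun j => ν (c j)
      map_add' := fun ν₁ ν₂ => by ext j; simp
      map_smul' := fun a ν => by ext j; simp }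
  have hker : LinearMap.ker Φ ≤ LinearMap.ker (ξ : StrongDual 𝕜 E →ₗ[𝕜] 𝕜) := by
    intro ν hν
    rw [LinearMap.mem_ker] at hν ⊢
    have : ∀ j, ν (c j) = 0 := fun j => congrFun hν j
    exact h ν this
  -- factor ξ through the quotient
  let Q := StrongDual 𝕜 E ⧸ LinearMap.ker Φ
  let ξbar : Q →ₗ[𝕜] 𝕜 := Submodule.liftQ _ (ξ : StrongDual 𝕜 E →ₗ[𝕜] 𝕜) hker
  let Φbar : Q →ₗ[𝕜] (Fin m → 𝕜) := Submodule.liftQ _ Φ le_rfl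
  have hΦinj : Function.Injective Φbar := by
    rw [← LinearMap.ker_eq_bot, Submodule.ker_liftQ_eq_bot _ _ _ le_rfl]
  -- identify Q with the range of Φbar and extend
  let e := LinearEquiv.ofInjective Φbar hΦinj
  obtain ⟨hmap, hcomp⟩ := LinearMap.exists_extend (ξbar.comp e.symm.toLinearMap)
  -- coefficients
  set a : Fin m → 𝕜 := fun j => hmap (fun j' => if j = j' then 1 else 0) with ha
  refine ⟨∑ j, a j • c j, fun ν => ?_⟩
  have h1 : ξ ν = ξbar (Submodule.Quotient.mk ν) := rfl
  have h2 : ξbar (Submodule.Quotient.mk ν) = hmap (Φ ν) := by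
    have he : e (Submodule.Quotient.mk ν) = ⟨Φ ν, ⟨Submodule.Quotient.mk ν, rfl⟩⟩ := by
      apply Subtype.ext
      simp [e, LinearEquiv.ofInjective_apply]
      rfl
    have : (⟨Φ ν, ⟨Submodule.Quotient.mk ν, rfl⟩⟩ : LinearMap.range Φbar) =
        e (Submodule.Quotient.mk ν) := he.symm
    calc ξbar (Submodule.Quotient.mk ν)
        = ξbar (e.symm (e (Submodule.Quotient.mk ν))) := by rw [LinearEquiv.symm_apply_apply]
      _ = (ξbar.comp e.symm.toLinearMap) (e (Submodule.Quotient.mk ν)) := rfl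
      _ = (hmap.comp (LinearMap.range Φbar).subtype) (e (Submodule.Quotient.mk ν)) := by
            rw [hcomp]
      _ = hmap ((e (Submodule.Quotient.mk ν)) : Fin m → 𝕜) := rfl
      _ = hmap (Φ ν) := by rw [he]
  have h3 : hmap (Φ ν) = ∑ j, (Φ ν) j * a j := by
    conv_lhs => rw [pi_eq_sum_univ (Φ ν), map_sum]
    congr 1; ext j
    rw [← smul_eq_mul, ← map_smul]
  rw [h1, h2, h3]
  rw [map_sum]
  congr 1; ext j
  rw [map_smul, smul_eq_mul]
  show (Φ ν) j * a j = a j * ν (c j)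
  have : (Φ ν) j = ν (c j) := rfl
  rw [this, mul_comm]

set_option maxHeartbeats 1000000 in
/-- L4: a functional far from the canonical image admits near-norming functionals vanishing
on finitely many prescribed vectors. -/
lemma aux_exists_perp (w : StrongDual 𝕜 (StrongDual 𝕜 E)) {δ : ℝ} (hδ : 0 < δ)
    (hd : ∀ f : E, δ ≤ ‖w - inclusionInDoubleDual 𝕜 E f‖) (m : ℕ) (c : Fin m → E) :
    ∃ ν : StrongDual 𝕜 E, ‖ν‖ ≤ 1 ∧ (∀ j, ν (c j) = 0) ∧ δ / 2 < RCLike.re (w ν) := by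
  classical
  by_contra hcon
  push_neg at hcon
  -- upgrade to a bound on the modulus via rotation
  have habs : ∀ ν : StrongDual 𝕜 E, ‖ν‖ ≤ 1 → (∀ j, ν (c j) = 0) → ‖w ν‖ ≤ δ / 2 := by
    intro ν hν hvan
    rcases eq_or_ne (w ν) 0 with h0 | h0
    · rw [h0, norm_zero]; positivity
    · set s : 𝕜 := (starRingEnd 𝕜) (w ν) / (‖w ν‖ : 𝕜) with hs
      have hsnorm : ‖s‖ = 1 := by
        rw [hs, norm_div, RCLike.norm_conj, RCLike.norm_ofReal,
          abs_of_pos (norm_pos_iff.mpr h0), div_self (norm_pos_iff.mpr h0).ne']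
      have h1 : ‖s • ν‖ ≤ 1 := by rw [norm_smul, hsnorm, one_mul]; exact hν
      have h2 : ∀ j, (s • ν) (c j) = 0 := fun j => by
        simp [hvan j]
      have h3 := hcon (s • ν) h1 h2
      have h4 : w (s • ν) = ((‖w ν‖ : ℝ) : 𝕜) := by
        rw [map_smul, smul_eq_mul, hs, div_mul_eq_mul_div, RCLike.conj_mul]
        push_cast
        rw [sq]
        field_simp
      rw [h4, RCLike.ofReal_re] at h3
      exact h3
  -- the annihilator subspace
  set p : Submodule 𝕜 (StrongDual 𝕜 E) :=
    { carrier := {ν | ∀ j, ν (c j) = 0}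
      add_mem' := fun {ν₁ ν₂} ha hb j => by
        simp only [Set.mem_setOf_eq] at ha hb
        simp [ha j, hb j]
      zero_mem' := fun j => rfl
      smul_mem' := fun a ν hν j => by
        simp only [Set.mem_setOf_eq] at hν
        simp [hν j] } with hp
  set wp : p →L[𝕜] 𝕜 := w.comp (Submodule.subtypeL p) with hwp
  letI : SeminormedAddCommGroup (p →L[𝕜] 𝕜) := ContinuousLinearMap.toSeminormedAddCommGroup (E := p) (F := 𝕜) (σ₁₂ := RingHom.id 𝕜)
  have hwpnorm : ‖wp‖ ≤ δ / 2 := by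
    refine ContinuousLinearMap.opNorm_le_bound _ (by positivity) fun x => ?_
    rcases eq_or_ne (x : StrongDual 𝕜 E) 0 with h0 | h0
    · have : wp x = 0 := by
        show w (x : StrongDual 𝕜 E) = 0
        rw [h0, map_zero]
      rw [this, norm_zero]; positivity
    · have hxn : (0:ℝ) < ‖(x : StrongDual 𝕜 E)‖ := norm_pos_iff.mpr h0
      have hx1 : ‖(((‖(x : StrongDual 𝕜 E)‖)⁻¹ : ℝ) : 𝕜) • (x : StrongDual 𝕜 E)‖ ≤ 1 := by
        rw [norm_smul, RCLike.norm_ofReal, abs_inv, abs_of_pos hxn,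
          inv_mul_cancel₀ hxn.ne']
      have hxvan : ∀ j, ((((‖(x : StrongDual 𝕜 E)‖)⁻¹ : ℝ) : 𝕜) • (x : StrongDual 𝕜 E)) (c j) = 0 := by
        intro j
        have hx2 : ∀ j, (x : StrongDual 𝕜 E) (c j) = 0 := x.2
        simp [hx2 j]
      have hb := habs _ hx1 hxvan
      rw [map_smul, norm_smul, RCLike.norm_ofReal, abs_inv, abs_of_pos hxn] at hb
      have hnx : ‖wp x‖ = ‖w (x : StrongDual 𝕜 E)‖ := rfl
      rw [hnx]
      calc ‖w (x : StrongDual 𝕜 E)‖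
          = ‖(x : StrongDual 𝕜 E)‖ * (‖(x : StrongDual 𝕜 E)‖⁻¹ * ‖w (x : StrongDual 𝕜 E)‖) := by
            field_simp
      _ ≤ ‖(x : StrongDual 𝕜 E)‖ * (δ / 2) := by nlinarith [norm_nonneg (w (x : StrongDual 𝕜 E))]
      _ = δ / 2 * ‖x‖ := mul_comm _ _
  obtain ⟨g, hg, hgnorm⟩ := exists_extension_norm_eq p wp
  have hvan : ∀ ν : StrongDual 𝕜 E, (∀ j, ν (c j) = 0) → (w - g) ν = 0 := by
    intro ν hν
    have h1 : g ν = wp ⟨ν, hν⟩ := hg ⟨ν, hν⟩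
    have h2 : wp ⟨ν, hν⟩ = w ν := rfl
    simp [h1, h2]
  obtain ⟨f, hf⟩ := aux_exists_of_vanish m c (w - g) hvan
  have heq : w - inclusionInDoubleDual 𝕜 E f = g := by
    ext ν
    have h1 : (w - g) ν = ν f := hf ν
    have h2 : inclusionInDoubleDual 𝕜 E f ν = ν f := rfl
    simp only [ContinuousLinearMap.sub_apply] at h1 ⊢
    rw [h2]
    linear_combination h1
  have hfin : δ ≤ ‖w - inclusionInDoubleDual 𝕜 E f‖ := hd f
  rw [heq, hgnorm] at hfin
  linarith

set_option maxHeartbeats 1000000 in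
/-- L2: Helly-type finite approximation (finite Goldstine). -/
lemma aux_helly (m : ℕ) (σ : Fin m → StrongDual 𝕜 E) (u : StrongDual 𝕜 (StrongDual 𝕜 E)) {ε : ℝ}
    (hε : 0 < ε) :
    ∃ b : E, ‖b‖ ≤ ‖u‖ + 1 ∧ ∀ j, ‖σ j b - u (σ j)‖ < ε := by
  classical
  set r : ℝ := ‖u‖ + 1 with hr
  have hrpos : 0 < r := by positivity
  set φ : E → (Fin m → 𝕜) := fun b => fun j => σ j b with hφ
  set v : Fin m → 𝕜 := fun j => u (σ j) with hv
  have hvK : v ∈ closure (φ '' Metric.closedBall 0 r) := by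
    by_contra hvn
    have hconv : Convex ℝ (φ '' Metric.closedBall 0 r) := by
      rintro x ⟨b₁, hb₁, rfl⟩ y ⟨b₂, hb₂, rfl⟩ a b ha hb hab
      refine ⟨((a:ℝ):𝕜) • b₁ + ((b:ℝ):𝕜) • b₂, ?_, ?_⟩
      · rw [Metric.mem_closedBall, dist_zero_right] at hb₁ hb₂ ⊢
        calc ‖((a:ℝ):𝕜) • b₁ + ((b:ℝ):𝕜) • b₂‖ ≤ ‖((a:ℝ):𝕜) • b₁‖ + ‖((b:ℝ):𝕜) • b₂‖ :=
              norm_add_le _ _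
        _ = a * ‖b₁‖ + b * ‖b₂‖ := by
              rw [norm_smul, norm_smul, RCLike.norm_ofReal, RCLike.norm_ofReal,
                abs_of_nonneg ha, abs_of_nonneg hb]
        _ ≤ a * r + b * r := by nlinarith
        _ = r := by rw [← add_mul, hab, one_mul]
      · ext j
        simp only [hφ, map_add, map_smul, Pi.add_apply, Pi.smul_apply, smul_eq_mul]
        rw [RCLike.real_smul_eq_coe_mul, RCLike.real_smul_eq_coe_mul]
    obtain ⟨f, u₀, hfK, hfv⟩ :=
      geometric_hahn_banach_closed_point hconv.closure isClosed_closure hvn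
    -- represent f via scalars t j
    set gj : Fin m → 𝕜 → ℝ := fun j z => f (Pi.single j z) with hgj
    have hgj_add : ∀ j (z z' : 𝕜), gj j (z + z') = gj j z + gj j z' := by
      intro j z z'
      have hsingle : (Pi.single j (z + z') : Fin m → 𝕜) = Pi.single j z + Pi.single j z' := by
        ext i
        by_cases hij : i = j <;> simp [Pi.single_apply, hij]
      show f (Pi.single j (z + z')) = f (Pi.single j z) + f (Pi.single j z')
      rw [hsingle, map_add]
    have hgj_smul : ∀ j (a : ℝ) (z : 𝕜), gj j (a • z) = a * gj j z := by
      intro j a z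
      have hsingle : (Pi.single j (a • z) : Fin m → 𝕜) = a • (Pi.single j z : Fin m → 𝕜) := by
        ext i
        by_cases hij : i = j <;> simp [Pi.single_apply, hij]
      show f (Pi.single j (a • z)) = a * f (Pi.single j z)
      rw [hsingle, map_smul]
      rfl
    have hgj_zero : ∀ j, gj j 0 = 0 := by
      intro j
      show f (Pi.single j (0:𝕜)) = 0
      have : (Pi.single j (0:𝕜) : Fin m → 𝕜) = 0 := by
        ext i; by_cases hij : i = j <;> simp [Pi.single_apply, hij]
      rw [this, map_zero]
    set t : Fin m → 𝕜 := fun j =>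
      ((gj j 1 : ℝ) : 𝕜) - ((gj j (RCLike.I) * RCLike.im (RCLike.I : 𝕜) : ℝ) : 𝕜)
        * (RCLike.I : 𝕜) with ht
    have hrep : ∀ j (z : 𝕜), gj j z = RCLike.re (t j * z) := by
      intro j z
      have hz : z = (RCLike.re z : ℝ) • (1 : 𝕜) + (RCLike.im z : ℝ) • (RCLike.I : 𝕜) := by
        rw [RCLike.real_smul_eq_coe_mul, RCLike.real_smul_eq_coe_mul, mul_one]
        exact (RCLike.re_add_im z).symm
      have hgz : gj j z = RCLike.re z * gj j 1 + RCLike.im z * gj j (RCLike.I : 𝕜) := by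
        conv_lhs => rw [hz]
        rw [hgj_add, hgj_smul, hgj_smul]
      have hre : RCLike.re (t j * z) =
          gj j 1 * RCLike.re z
            + (gj j (RCLike.I) * RCLike.im (RCLike.I : 𝕜)) * (RCLike.im (RCLike.I : 𝕜)
              * RCLike.im z) := by
        rw [ht]
        simp only [RCLike.mul_re, RCLike.mul_im, map_sub, RCLike.ofReal_re, RCLike.ofReal_im,
          RCLike.I_re]
        ring
      rcases RCLike.I_mul_I_ax (K := 𝕜) with hI | hI
      · have hgI : gj j RCLike.I = 0 := by rw [hI]; exact hgj_zero j
        rw [hgz, hre, hgI]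
        ring
      · have him : RCLike.im (RCLike.I : 𝕜) * RCLike.im (RCLike.I : 𝕜) = 1 := by
          have h1 : RCLike.re ((RCLike.I : 𝕜) * RCLike.I) = RCLike.re (-1 : 𝕜) := by rw [hI]
          rw [RCLike.mul_re, RCLike.I_re, map_neg, RCLike.one_re] at h1
          nlinarith [h1]
        rw [hgz, hre]
        linear_combination (-(gj j RCLike.I * RCLike.im z)) * him
    have hfrep : ∀ x : Fin m → 𝕜, f x = RCLike.re (∑ j, t j * x j) := by
      intro x
      have h1 : f x = ∑ j, gj j (x j) := by
        conv_lhs => rw [← Finset.univ_sum_single x, map_sum]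
      rw [h1, map_sum]
      congr 1; ext j
      exact hrep j (x j)
    set μ : StrongDual 𝕜 E := ∑ j, t j • σ j with hμ
    have hμapp : ∀ b : E, μ b = ∑ j, t j * σ j b := by
      intro b
      rw [hμ]
      simp [ContinuousLinearMap.sum_apply]
    have hball : ∀ b : E, ‖b‖ ≤ r → RCLike.re (μ b) < u₀ := by
      intro b hb
      have hmem : φ b ∈ closure (φ '' Metric.closedBall 0 r) :=
        subset_closure ⟨b, by rwa [Metric.mem_closedBall, dist_zero_right], rfl⟩
      have := hfK _ hmem
      rwa [hfrep, show (fun j => t j * φ b j) = fun j => t j * σ j b from rfl,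
        ← hμapp b] at this
    have h1 : r * ‖μ‖ ≤ u₀ := by
      by_contra hcon
      push_neg at hcon
      obtain ⟨b, hb, hub⟩ := aux_exists_re_lt μ hrpos.le hcon
      exact absurd (hball b hb) (not_lt.mpr hub.le)
    have h2 : u₀ < RCLike.re (u μ) := by
      have : f v = RCLike.re (u μ) := by
        rw [hfrep]
        congr 1
        rw [hμ, map_sum]
        congr 1; ext j
        rw [map_smul, smul_eq_mul]
      rwa [this] at hfv
    have h3 : RCLike.re (u μ) ≤ ‖u‖ * ‖μ‖ := by
      calc RCLike.re (u μ) ≤ ‖u μ‖ := RCLike.re_le_norm _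
      _ ≤ ‖u‖ * ‖μ‖ := u.le_opNorm μ
    have hμn : 0 ≤ ‖μ‖ := norm_nonneg μ
    rw [hr] at h1
    nlinarith
  obtain ⟨y, ⟨b, hbmem, rfl⟩, hdist⟩ := Metric.mem_closure_iff.mp hvK ε hε
  refine ⟨b, by rwa [Metric.mem_closedBall, dist_zero_right] at hbmem, fun j => ?_⟩
  have := (dist_pi_lt_iff hε).mp hdist j
  rwa [dist_comm, dist_eq_norm] at this

end AuxLemmas

set_option maxHeartbeats 2000000 in
/-- Suppose `a₀ ∈ A` satisfies `B** = π_ℓ***(â₀, B**)` and has the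
`Rw*w`-property with respect to `B`: whenever a net `(ν_α a₀)` (with `(ν a₀)(b) := ν(π_ℓ(a₀,b))`)
tends to `0` in the weak* topology of `B*` it also tends to `0` in the weak topology of `B*`.
Then `Z^ℓ_{A**}(B**) = B**`. -/
theorem leftTopologicalCenter_module_eq_top_of_factorization_of_RwStarW
    {𝕜 : Type*} [RCLike 𝕜]
    {A : Type*} [NonUnitalNormedRing A] [NormedSpace 𝕜 A]
    [IsScalarTower 𝕜 A A] [SMulCommClass 𝕜 A A] [CompleteSpace A]
    {B : Type*} [NormedAddCommGroup B] [NormedSpace 𝕜 B] [CompleteSpace B]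
    (πℓ : A →L[𝕜] B →L[𝕜] B) (πr : B →L[𝕜] A →L[𝕜] B)
    (hℓ : ∀ (a₁ a₂ : A) (b : B), πℓ (a₁ * a₂) b = πℓ a₁ (πℓ a₂ b))
    (hr : ∀ (b : B) (a₁ a₂ : A), πr b (a₁ * a₂) = πr (πr b a₁) a₂)
    (hℓr : ∀ (a₁ : A) (b : B) (a₂ : A), πr (πℓ a₁ b) a₂ = πℓ a₁ (πr b a₂))
    (a₀ : A)
    (hfac : ∀ b'' : StrongDual 𝕜 (StrongDual 𝕜 B), ∃ y'' : StrongDual 𝕜 (StrongDual 𝕜 B),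
      arensExt 𝕜 πℓ (inclusionInDoubleDual 𝕜 A a₀) y'' = b'')
    (hRww : ∀ {ι : Type*} (l : Filter ι) (ν : ι → StrongDual 𝕜 B),
      Tendsto
          (fun i => (StrongDual.toWeakDual ((ν i).comp (πℓ a₀)) : WeakDual 𝕜 B)) l (𝓝 0) →
        Tendsto
          (fun i => (toWeakSpace 𝕜 (StrongDual 𝕜 B) ((ν i).comp (πℓ a₀)) :
            WeakSpace 𝕜 (StrongDual 𝕜 B))) l (𝓝 0)) :
    ∀ b'' : StrongDual 𝕜 (StrongDual 𝕜 B),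
      IsWeakStarWeakStarContinuous 𝕜
        (fun a'' : StrongDual 𝕜 (StrongDual 𝕜 A) => arensExt 𝕜 πr b'' a'') := by
  --

  classical
  -- the left-multiplication operator and pre-composition on duals
  set T : B →L[𝕜] B := πℓ a₀ with hT
  set Tadj : StrongDual 𝕜 B →L[𝕜] StrongDual 𝕜 B := (compL 𝕜 B B 𝕜).flip T with hTadj
  have hTadj_apply : ∀ (ν : StrongDual 𝕜 B) (b : B), Tadj ν b = ν (T b) := fun ν b => rfl
  -- KEY STEP: every functional of the form `u ∘ Tadj` is an evaluation at some point of B.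
  have key : ∀ u : StrongDual 𝕜 (StrongDual 𝕜 B), ∃ f : B, ∀ ν : StrongDual 𝕜 B, u (Tadj ν) = ν f := by
    intro u
    by_contra hcon
    push_neg at hcon
    set w : StrongDual 𝕜 (StrongDual 𝕜 B) := u.comp Tadj with hw
    have hwapp : ∀ ν : StrongDual 𝕜 B, w ν = u (Tadj ν) := fun ν => rfl
    have hwnot : w ∉ Set.range (fun b : B => inclusionInDoubleDual 𝕜 B b) := by
      rintro ⟨f, hf⟩
      obtain ⟨ν, hν⟩ := hcon f
      apply hν
      rw [← hwapp]
      rw [← hf]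
      rfl
    have hclosed : IsClosed (Set.range fun b : B => inclusionInDoubleDual 𝕜 B b) := by
      have hiso : Isometry fun b : B => inclusionInDoubleDual 𝕜 B b :=
        (inclusionInDoubleDualLi 𝕜 (E := B)).isometry
      exact hiso.isClosedEmbedding.isClosed_range
    obtain ⟨δ, hδpos, hball⟩ := Metric.isOpen_iff.mp hclosed.isOpen_compl w hwnot
    have hd : ∀ f : B, δ ≤ ‖w - inclusionInDoubleDual 𝕜 B f‖ := by
      intro f
      by_contra hlt
      push_neg at hlt
      have hmem : inclusionInDoubleDual 𝕜 B f ∈ Metric.ball w δ := by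
        rw [Metric.mem_ball, dist_comm, dist_eq_norm w]
        exact hlt
      exact (hball hmem) ⟨f, rfl⟩
    -- recursive construction of the two interleaved sequences
    set P : ℕ → (ℕ → StrongDual 𝕜 B × B) → StrongDual 𝕜 B × B → Prop := fun n f a =>
      ‖a.1‖ ≤ 1 ∧ (∀ m, m < n → a.1 (T ((f m).2)) = 0) ∧ δ / 2 < RCLike.re (w a.1) ∧
      ‖a.2‖ ≤ ‖u‖ + 1 ∧ (∀ m, m < n → ‖((f m).1) (T a.2) - w ((f m).1)‖ < 1 / (n + 1)) ∧
      ‖a.1 (T a.2) - w a.1‖ < 1 / (n + 1) with hP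
    have hmono : ∀ n (f g : ℕ → StrongDual 𝕜 B × B), (∀ m, m < n → f m = g m) →
        ∀ a, P n f a → P n g a := by
      intro n f g hfg a ha
      obtain ⟨h1, h2, h3, h4, h5, h6⟩ := ha
      exact ⟨h1, fun m hm => by rw [← hfg m hm]; exact h2 m hm, h3, h4,
        fun m hm => by rw [← hfg m hm]; exact h5 m hm, h6⟩
    have hex : ∀ (f : ℕ → StrongDual 𝕜 B × B) (n : ℕ), ∃ a, P n f a := by
      intro f n
      obtain ⟨ν, hν1, hν2, hν3⟩ :=
        aux_exists_perp w hδpos hd n (fun m : Fin n => T ((f m).2))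
      have hεpos : (0:ℝ) < 1 / (n + 1) := by positivity
      set σ' : Fin (n + 1) → StrongDual 𝕜 B := fun j =>
        if h : (j : ℕ) < n then Tadj ((f j).1) else Tadj ν with hσ'
      obtain ⟨b, hb1, hb2⟩ := aux_helly (n + 1) σ' u hεpos
      refine ⟨(ν, b), hν1, ?_, hν3, hb1, ?_, ?_⟩
      · intro m hm
        exact hν2 ⟨m, hm⟩
      · intro m hm
        have hmn : m < n + 1 := by omega
        have h := hb2 ⟨m, hmn⟩
        simp only [hσ'] at h
        rw [dif_pos (show ((⟨m, hmn⟩ : Fin (n+1)) : ℕ) < n from hm)] at h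
        exact h
      · have hnn : n < n + 1 := by omega
        have h := hb2 ⟨n, hnn⟩
        simp only [hσ'] at h
        rw [dif_neg (show ¬((⟨n, hnn⟩ : Fin (n+1)) : ℕ) < n from Nat.lt_irrefl n)] at h
        exact h
    obtain ⟨F, hF⟩ := aux_exists_seq_rec (0, 0) P hmono hex
    set νs : ℕ → StrongDual 𝕜 B := fun n => (F n).1 with hνs
    set bs : ℕ → B := fun n => (F n).2 with hbs
    have hF1 : ∀ n, ‖νs n‖ ≤ 1 := fun n => (hF n).1
    have hF2 : ∀ n m, m < n → νs n (T (bs m)) = 0 := fun n m hm => (hF n).2.1 m hm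
    have hF3 : ∀ n, δ / 2 < RCLike.re (w (νs n)) := fun n => (hF n).2.2.1
    have hF4 : ∀ n, ‖bs n‖ ≤ ‖u‖ + 1 := fun n => (hF n).2.2.2.1
    have hF5 : ∀ n m, m < n → ‖νs m (T (bs n)) - w (νs m)‖ < 1 / (n + 1) :=
      fun n m hm => (hF n).2.2.2.2.1 m hm
    have hF6 : ∀ n, ‖νs n (T (bs n)) - w (νs n)‖ < 1 / (n + 1) := fun n => (hF n).2.2.2.2.2
    -- ultrafilter limits
    set U : Ultrafilter ℕ := Ultrafilter.of atTop with hU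
    have hUle : (U : Filter ℕ) ≤ atTop := Ultrafilter.of_le atTop
    obtain ⟨νU, hνU⟩ := aux_exists_ulim U νs hF1
    have hJb : ∀ m, ‖inclusionInDoubleDual 𝕜 B (bs m)‖ ≤ ‖u‖ + 1 := by
      intro m
      have : ‖inclusionInDoubleDual 𝕜 B (bs m)‖ = ‖bs m‖ :=
        (inclusionInDoubleDualLi 𝕜 (E := B)).norm_map (bs m)
      rw [this]; exact hF4 m
    obtain ⟨η, hη⟩ := aux_exists_ulim U (fun m => inclusionInDoubleDual 𝕜 B (bs m)) hJb
    -- limit facts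
    have hstep1 : ∀ m, νU (T (bs m)) = 0 := by
      intro m
      refine tendsto_nhds_unique (hνU (T (bs m))) ?_
      refine Tendsto.mono_left ?_ hUle
      have hev : ∀ᶠ n in atTop, (0:𝕜) = νs n (T (bs m)) := by
        filter_upwards [eventually_gt_atTop m] with n hn
        exact (hF2 n m hn).symm
      exact tendsto_const_nhds.congr' hev
    have hstep2 : ∀ n, η (Tadj (νs n)) = w (νs n) := by
      intro n
      refine tendsto_nhds_unique (hη (Tadj (νs n))) ?_
      refine Tendsto.mono_left ?_ hUle
      have hval : ∀ m, inclusionInDoubleDual 𝕜 B (bs m) (Tadj (νs n)) = νs n (T (bs m)) :=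
        fun m => rfl
      simp only [hval]
      rw [tendsto_iff_dist_tendsto_zero]
      refine squeeze_zero' (g := fun m : ℕ => 1 / ((m:ℝ) + 1))
        (Eventually.of_forall fun m => dist_nonneg) ?_ ?_
      · filter_upwards [eventually_gt_atTop n] with m hm
        rw [dist_eq_norm]
        exact le_of_lt (hF5 m n hm)
      · exact tendsto_one_div_add_atTop_nhds_zero_nat
    have hstep3 : η (Tadj νU) = 0 := by
      refine tendsto_nhds_unique (hη (Tadj νU)) ?_
      have hval : ∀ m, inclusionInDoubleDual 𝕜 B (bs m) (Tadj νU) = νU (T (bs m)) :=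
        fun m => rfl
      simp only [hval, hstep1]
      exact tendsto_const_nhds
    -- apply the Rw*w hypothesis along the ultrafilter
    have h1 : Tendsto
        (fun i : ULift ℕ => (StrongDual.toWeakDual (((fun i : ULift ℕ => νs i.down - νU) i).comp T) :
          WeakDual 𝕜 B)) (Filter.map ULift.up ↑U) (𝓝 0) := by
      rw [Filter.tendsto_map'_iff]
      rw [tendsto_iff_forall_eval_tendsto_topDualPairing]
      intro b
      have hval : ∀ n : ℕ,
          topDualPairing 𝕜 B (StrongDual.toWeakDual ((νs n - νU).comp T)) b
            = νs n (T b) - νU (T b) := fun n => rfl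
      have hz : topDualPairing 𝕜 B (0 : WeakDual 𝕜 B) b = 0 := rfl
      show Tendsto (fun n : ℕ =>
          topDualPairing 𝕜 B (StrongDual.toWeakDual ((νs n - νU).comp T)) b) ↑U
          (𝓝 (topDualPairing 𝕜 B (0 : WeakDual 𝕜 B) b))
      simp only [hval, hz]
      have := (hνU (T b)).sub_const (νU (T b))
      simpa using this
    have h2 := hRww (Filter.map ULift.up ↑U) (fun i : ULift ℕ => νs i.down - νU) h1
    have h5 : Tendsto (fun n : ℕ => w (νs n)) ↑U (𝓝 0) := by
      have hcont : Continuous fun x : WeakSpace 𝕜 (StrongDual 𝕜 B) =>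
          (topDualPairing 𝕜 (StrongDual 𝕜 B)).flip x η :=
        WeakBilin.eval_continuous ((topDualPairing 𝕜 (StrongDual 𝕜 B)).flip) η
      have h3 := (hcont.tendsto 0).comp h2
      rw [Filter.tendsto_map'_iff] at h3
      have hlim : (topDualPairing 𝕜 (StrongDual 𝕜 B)).flip (0 : WeakSpace 𝕜 (StrongDual 𝕜 B)) η = 0 := by
        exact map_zero η
      rw [hlim] at h3
      refine h3.congr ?_
      intro n
      show η ((νs n - νU).comp T) = w (νs n)
      have hsplit : (νs n - νU).comp T = Tadj (νs n) - Tadj νU := by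
        ext b; rfl
      rw [hsplit, map_sub, hstep2, hstep3, sub_zero]
    have h6 : Tendsto (fun n : ℕ => RCLike.re (w (νs n))) ↑U (𝓝 0) := by
      have := (RCLike.continuous_re.tendsto (0:𝕜)).comp h5
      simpa [Function.comp_def] using this
    have h7 : ∀ᶠ n in ↑U, RCLike.re (w (νs n)) < δ / 2 :=
      h6.eventually_lt_const (by positivity)
    obtain ⟨n, hn⟩ := (h7.and (Eventually.of_forall hF3)).exists
    linarith [hn.1, hn.2]
  -- conclude: b'' is an evaluation, hence the map is weak*-weak* continuous
  intro b''
  obtain ⟨y'', hy⟩ := hfac b''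
  obtain ⟨b₀, hb₀⟩ := key y''
  have hb'' : ∀ ν : StrongDual 𝕜 B, b'' ν = ν b₀ := by
    intro ν
    rw [← hy]
    exact hb₀ ν
  unfold IsWeakStarWeakStarContinuous
  apply WeakDual.continuous_of_continuous_eval
  intro ν
  have heval : ∀ x : WeakDual 𝕜 (StrongDual 𝕜 A),
      (arensExt 𝕜 πr b'' (WeakDual.toStrongDual x)) ν
        = (WeakDual.toStrongDual x) (arensS 𝕜 πr ν b₀) := by
    intro x
    have h1 : (arensExt 𝕜 πr b'' (WeakDual.toStrongDual x)) ν
        = b'' (arensSS 𝕜 πr (WeakDual.toStrongDual x) ν) := rfl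
    rw [h1, hb'' (arensSS 𝕜 πr (WeakDual.toStrongDual x) ν)]
    rfl
  show Continuous fun x : WeakDual 𝕜 (StrongDual 𝕜 A) =>
    (arensExt 𝕜 πr b'' (WeakDual.toStrongDual x)) ν
  simp only [heval]
  exact WeakDual.eval_continuous _
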